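/- Let X be a simplicial abelian group and m ≥ 0. The following are equivalent: (1) for every n > m, the Segal maps X_n → X_{Λ_0^n} and X_n → X_{Λ_n^n} into the 0-th and n-th horn groups are isomorphisms; (2) the normalized Moore complex of X is m-truncated, i.e. ⋂_{i=1}^n ker(d_i : X_n → X_{n-1}) = 0 for all n > m. -/

import Mathlib

open CategoryTheory Simplicial Opposite

/-- The compatibility ("matching") conditions cutting out the `0`-th horn
`X_{Λ₀^{n+1}}` inside `(X_n)^{n+1}`: a tuple `(x_1, …, x_{n+1})` (indexed here by
`Fin (n+1)`) is a horn iff `d_i x_j = d_{j-1} x_i` for all `1 ≤ i < j ≤ n+1`.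
(For `n = 0` there are no conditions.) -/
def hornCond0 (X : SimplicialObject AddCommGrpCat) :
    (n : ℕ) → (Fin (n + 1) → X.obj (op ⦋n⦌)) → Prop := fun n x => match n, x with
  | 0, _ => True
  | k + 1, x => ∀ i j : Fin (k + 1), i ≤ j →
      X.δ i.succ (x j.succ) = X.δ j.succ (x i.castSucc)

/-- The `0`-th horn group `X_{Λ₀^{n+1}}` of a simplicial abelian group. -/
def hornGroup0 (X : SimplicialObject AddCommGrpCat) (n : ℕ) :
    AddSubgroup (Fin (n + 1) → X.obj (op ⦋n⦌)) where
  carrier := {x | hornCond0 X n x}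
  zero_mem' := by
    cases n with
    | zero => exact trivial
    | succ k =>
      simp only [Set.mem_setOf_eq, hornCond0]
      intro i j h
      simp
  add_mem' := by
    cases n with
    | zero => intros; exact trivial
    | succ k =>
      intro a b ha hb
      simp only [Set.mem_setOf_eq, hornCond0] at *
      intro i j h
      simp only [Pi.add_apply, map_add, ha i j h, hb i j h]
  neg_mem' := by
    cases n with
    | zero => intros; exact trivial
    | succ k =>
      intro a ha
      simp only [Set.mem_setOf_eq, hornCond0] at *
      intro i j h
      simp only [Pi.neg_apply, map_neg, ha i j h]

/-- The Segal map `X_{n+1} → (X_n)^{n+1}`, `x ↦ (d_1 x, …, d_{n+1} x)`. -/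
def segalMap0 (X : SimplicialObject AddCommGrpCat) (n : ℕ) :
    X.obj (op ⦋n + 1⦌) →+ (Fin (n + 1) → X.obj (op ⦋n⦌)) where
  toFun y := fun i => X.δ i.succ y
  map_zero' := by funext i; simp
  map_add' a b := by funext i; simp

/-- The `(n+1)`-st term `⋂_{i=1}^{n+1} ker dᵢ` of the normalized Moore complex. -/
def mooreGroup0 (X : SimplicialObject AddCommGrpCat) (n : ℕ) :
    AddSubgroup (X.obj (op ⦋n + 1⦌)) where
  carrier := {y | ∀ i : Fin (n + 1), X.δ i.succ y = 0}
  zero_mem' := by intro i; simp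
  add_mem' := by intro a b ha hb i; simp [ha i, hb i]
  neg_mem' := by intro a ha i; simp [ha i]

/-- The matching conditions for the `n`-th horn `X_{Λ_{n+1}^{n+1}}`: a tuple
`(x_0, …, x_n)` with `d_i x_j = d_{j-1} x_i` for all `0 ≤ i < j ≤ n`. -/
def hornCondN (X : SimplicialObject AddCommGrpCat) :
    (n : ℕ) → (Fin (n + 1) → X.obj (op ⦋n⦌)) → Prop := fun n x => match n, x with
  | 0, _ => True
  | k + 1, x => ∀ i j : Fin (k + 1), i ≤ j →
      X.δ i.castSucc (x j.succ) = X.δ j.castSucc (x i.castSucc)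

/-- The `n`-th horn group `X_{Λ_{n+1}^{n+1}}` of a simplicial abelian group. -/
def hornGroupN (X : SimplicialObject AddCommGrpCat) (n : ℕ) :
    AddSubgroup (Fin (n + 1) → X.obj (op ⦋n⦌)) where
  carrier := {x | hornCondN X n x}
  zero_mem' := by
    cases n with
    | zero => exact trivial
    | succ k =>
      simp only [Set.mem_setOf_eq, hornCondN]
      intro i j h
      simp
  add_mem' := by
    cases n with
    | zero => intros; exact trivial
    | succ k =>
      intro a b ha hb
      simp only [Set.mem_setOf_eq, hornCondN] at *
      intro i j h
      simp only [Pi.add_apply, map_add, ha i j h, hb i j h]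
  neg_mem' := by
    cases n with
    | zero => intros; exact trivial
    | succ k =>
      intro a ha
      simp only [Set.mem_setOf_eq, hornCondN] at *
      intro i j h
      simp only [Pi.neg_apply, map_neg, ha i j h]

/-- The Segal map `X_{n+1} → (X_n)^{n+1}`, `x ↦ (d_0 x, …, d_n x)`. -/
def segalMapN (X : SimplicialObject AddCommGrpCat) (n : ℕ) :
    X.obj (op ⦋n + 1⦌) →+ (Fin (n + 1) → X.obj (op ⦋n⦌)) where
  toFun y := fun i => X.δ i.castSucc y
  map_zero' := by funext i; simp
  map_add' a b := by funext i; simp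


section Aux
variable (X : SimplicialObject AddCommGrpCat)
section Aux
variable (X : SimplicialObject AddCommGrpCat)

lemma dd_apply {n : ℕ} {i j : Fin (n + 2)} (H : i ≤ j) (y : X.obj (op ⦋n + 2⦌)) :
    X.δ i (X.δ j.succ y) = X.δ j (X.δ i.castSucc y) := by
  have h := congrArg (fun f => f y) (X.δ_comp_δ H)
  simpa using h

lemma ds_self_apply {n : ℕ} (i : Fin (n + 1)) (t : X.obj (op ⦋n⦌)) :
    X.δ i.castSucc (X.σ i t) = t := by
  have h := congrArg (fun f => f t) (SimplicialObject.δ_comp_σ_self (X := X) (i := i))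
  simpa using h

lemma ds_succ_apply {n : ℕ} (i : Fin (n + 1)) (t : X.obj (op ⦋n⦌)) :
    X.δ i.succ (X.σ i t) = t := by
  have h := congrArg (fun f => f t) (SimplicialObject.δ_comp_σ_succ (X := X) (i := i))
  simpa using h

lemma ds_le_apply {n : ℕ} {i : Fin (n + 2)} {j : Fin (n + 1)} (H : i ≤ j.castSucc)
    (t : X.obj (op ⦋n + 1⦌)) :
    X.δ i.castSucc (X.σ j.succ t) = X.σ j (X.δ i t) := by
  have h := congrArg (fun f => f t) (X.δ_comp_σ_of_le H)
  simpa using h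

lemma ds_gt_apply {n : ℕ} {i : Fin (n + 2)} {j : Fin (n + 1)} (H : j.castSucc < i)
    (t : X.obj (op ⦋n + 1⦌)) :
    X.δ i.succ (X.σ j.castSucc t) = X.σ j (X.δ i t) := by
  have h := congrArg (fun f => f t) (X.δ_comp_σ_of_gt H)
  simpa using h


lemma sigma_face_zero {l : ℕ} (t : X.obj (op ⦋l + 1⦌))
    (ht : ∀ q : Fin (l + 2), X.δ q t = 0)
    (j : Fin (l + 2)) (i : Fin (l + 3))
    (h1 : (i : ℕ) ≠ (j : ℕ)) (h2 : (i : ℕ) ≠ (j : ℕ) + 1) :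
    X.δ i (X.σ j t) = 0 := by
  rcases Nat.lt_or_ge (i : ℕ) (j : ℕ) with h | h
  · -- i < j, use δ_comp_σ_of_le
    have hj1 : 1 ≤ (j : ℕ) := by omega
    set j' : Fin (l + 1) := ⟨(j : ℕ) - 1, by omega⟩ with hj'
    set i' : Fin (l + 2) := ⟨(i : ℕ), by omega⟩ with hi'
    have e1 : j = j'.succ := by ext; simp [hj']; omega
    have e2 : i = i'.castSucc := by ext; simp [hi']
    rw [e1, e2, ds_le_apply X (by simp [Fin.le_def, hi', hj']; omega) t, ht i', map_zero]
  · -- i ≥ j + 2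
    have hij : (j : ℕ) + 2 ≤ (i : ℕ) := by omega
    set j' : Fin (l + 1) := ⟨(j : ℕ), by omega⟩ with hj'
    set i' : Fin (l + 2) := ⟨(i : ℕ) - 1, by omega⟩ with hi'
    have e1 : j = j'.castSucc := by ext; simp [hj']
    have e2 : i = i'.succ := by ext; simp [hi']; omega
    rw [e1, e2, ds_gt_apply X (by simp [Fin.lt_def, hi', hj']; omega) t, ht i', map_zero]

lemma single_face (l : ℕ)
    (hN : ∀ y : X.obj (op ⦋l + 2⦌), (∀ i : Fin (l + 2), X.δ i.succ y = 0) → y = 0) :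
    ∀ r : ℕ, r ≤ l + 2 → ∀ y : X.obj (op ⦋l + 2⦌),
      (∀ i : Fin (l + 3), (i : ℕ) ≠ r → X.δ i y = 0) → y = 0 := by
  intro r
  induction r with
  | zero =>
    intro _ y hy
    exact hN y (fun i => hy i.succ (by simp))
  | succ r ih =>
    intro hr y hy
    set t : X.obj (op ⦋l + 1⦌) := X.δ (⟨r + 1, by omega⟩ : Fin (l + 3)) y with htdef
    have ht : ∀ q : Fin (l + 2), X.δ q t = 0 := by
      intro q
      rcases Nat.lt_or_ge (q : ℕ) (r + 1) with hq | hq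
      · have e : (⟨r + 1, by omega⟩ : Fin (l + 3)) = (⟨r, by omega⟩ : Fin (l + 2)).succ := by
          ext; simp
        rw [htdef, e, dd_apply X (i := q) (j := ⟨r, by omega⟩) (by simp [Fin.le_def]; omega) y,
          hy q.castSucc (by simp; omega), map_zero]
      · have e : (⟨r + 1, by omega⟩ : Fin (l + 3))
            = (⟨r + 1, by omega⟩ : Fin (l + 2)).castSucc := by ext; simp
        rw [htdef, e, ← dd_apply X (i := ⟨r + 1, by omega⟩) (j := q)
          (by simp [Fin.le_def]; omega) y, hy q.succ (by simp; omega), map_zero]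
    set P : Fin (l + 2) := ⟨r, by omega⟩ with hP
    have hy' : ∀ i : Fin (l + 3), (i : ℕ) ≠ r → X.δ i (y - X.σ P t) = 0 := by
      intro i hi
      rw [map_sub]
      by_cases hir : (i : ℕ) = r + 1
      · have e1 : i = P.succ := by ext; simp [hP, hir]
        have eI : i = (⟨r + 1, by omega⟩ : Fin (l + 3)) := by ext; simpa using hir
        have e2 : X.δ i y = t := by rw [htdef, eI]
        rw [e1, ds_succ_apply X P t, ← e1, e2, sub_self]
      · rw [hy i hir, sigma_face_zero X t ht P i (by simpa [hP] using hi)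
          (by simpa [hP] using hir), sub_self]
    have hz := ih (by omega) _ hy'
    have hyP : y = X.σ P t := by
      have := sub_eq_zero.mp hz
      linear_combination (norm := abel) this
    have ht0 : t = 0 := by
      have h1 : X.δ P.castSucc y = 0 := hy P.castSucc (by simp [hP])
      rw [hyP, ds_self_apply X P t] at h1
      exact h1
    rw [hyP, ht0, map_zero]

lemma kerN_of_ker0 (n : ℕ)
    (hN : ∀ y : X.obj (op ⦋n + 1⦌), (∀ i : Fin (n + 1), X.δ i.succ y = 0) → y = 0)
    (y : X.obj (op ⦋n + 1⦌)) (hy : ∀ i : Fin (n + 1), X.δ i.castSucc y = 0) :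
    y = 0 := by
  cases n with
  | zero =>
    set t : X.obj (op ⦋0⦌) := X.δ (1 : Fin 2) y with htdef
    have e1 : (1 : Fin 2) = (0 : Fin 1).succ := by ext; simp
    have hz : y - X.σ 0 t = 0 := by
      apply hN
      intro i
      have hi0 : i = 0 := Fin.fin_one_eq_zero i
      subst hi0
      rw [map_sub, ds_succ_apply X (0 : Fin 1) t, htdef, e1, sub_self]
    have hyt : y = X.σ 0 t := by
      have := sub_eq_zero.mp hz
      linear_combination (norm := abel) this
    have ht0 : t = 0 := by
      have h0 := hy 0
      rw [hyt, show ((0 : Fin 1).castSucc) = (0 : Fin 2) from by ext; simp] at h0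
      rw [show (0 : Fin 2) = (0 : Fin 1).castSucc from by ext; simp] at h0
      rwa [ds_self_apply X (0 : Fin 1) t] at h0
    rw [hyt, ht0, map_zero]
  | succ l =>
    apply single_face X l hN (l + 2) le_rfl y
    intro i hi
    have : i = (⟨(i : ℕ), by omega⟩ : Fin (l + 2)).castSucc := by ext; simp
    rw [this]
    exact hy _

lemma seg0_mem (n : ℕ) (y : X.obj (op ⦋n + 1⦌)) : segalMap0 X n y ∈ hornGroup0 X n := by
  cases n with
  | zero => exact trivial
  | succ k =>
    show hornCond0 X (k + 1) (segalMap0 X (k + 1) y)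
    intro i j h
    show X.δ i.succ (X.δ (j.succ).succ y) = X.δ j.succ (X.δ (i.castSucc).succ y)
    rw [Fin.succ_castSucc]
    exact dd_apply X (by simpa using h) y

lemma segN_mem (n : ℕ) (y : X.obj (op ⦋n + 1⦌)) : segalMapN X n y ∈ hornGroupN X n := by
  cases n with
  | zero => exact trivial
  | succ k =>
    show hornCondN X (k + 1) (segalMapN X (k + 1) y)
    intro i j h
    show X.δ i.castSucc (X.δ (j.succ).castSucc y) = X.δ j.castSucc (X.δ (i.castSucc).castSucc y)
    rw [← Fin.succ_castSucc]
    exact dd_apply X (by simpa using h) y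

lemma fill0 (n : ℕ) (x : Fin (n + 1) → X.obj (op ⦋n⦌)) (hx : hornCond0 X n x) :
    ∃ y : X.obj (op ⦋n + 1⦌), ∀ i : Fin (n + 1), X.δ i.succ y = x i := by
  cases n with
  | zero =>
    refine ⟨X.σ 0 (x 0), ?_⟩
    intro i
    have hi0 : i = 0 := Fin.fin_one_eq_zero i
    subst hi0
    exact ds_succ_apply X (0 : Fin 1) (x 0)
  | succ k =>
    suffices h : ∀ r : ℕ, r ≤ k + 1 → ∃ y, ∀ i : Fin (k + 2),
        k + 1 - r ≤ (i : ℕ) → X.δ i.succ y = x i by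
      obtain ⟨y, hy⟩ := h (k + 1) le_rfl
      exact ⟨y, fun i => hy i (by omega)⟩
    intro r
    induction r with
    | zero =>
      intro _
      refine ⟨X.σ (Fin.last (k + 1)) (x (Fin.last (k + 1))), ?_⟩
      intro i hi
      have hil : i = Fin.last (k + 1) := by
        have := i.isLt
        ext
        simp only [Fin.val_last]
        omega
      subst hil
      exact ds_succ_apply X _ _
    | succ r ih =>
      intro hr
      obtain ⟨w, hw⟩ := ih (by omega)
      set Q : Fin (k + 1) := ⟨k - r, by omega⟩ with hQ
      set c : X.obj (op ⦋k + 1⦌) := x Q.castSucc - X.δ (Q.succ.castSucc) w with hc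
      have hcface : ∀ q : Fin (k + 1), k - r ≤ (q : ℕ) → X.δ q.succ c = 0 := by
        intro q hq
        have t1 := hx Q q (by simp [Fin.le_def, hQ]; omega)
        have t2 := dd_apply X (i := Q.succ) (j := q.succ)
          (by simp [Fin.le_def, hQ]; omega) w
        have t3 : X.δ (q.succ).succ w = x q.succ := hw q.succ (by simp [Fin.val_succ]; omega)
        rw [hc, map_sub, ← t1, ← t2, t3, sub_self]
      refine ⟨w + X.σ Q.castSucc c, ?_⟩
      intro i hi
      rw [map_add]
      by_cases hiP : (i : ℕ) = k - r
      · have eiP : i = Q.castSucc := by ext; simp [hQ]; omega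
        subst eiP
        rw [ds_succ_apply X Q.castSucc c, hc, ← Fin.succ_castSucc]
        abel
      · have e3 : i = (⟨(i : ℕ) - 1, by omega⟩ : Fin (k + 1)).succ := by
          ext; simp; omega
        rw [hw i (by omega), ds_gt_apply X (i := i) (j := Q)
          (by simp [Fin.lt_def, hQ]; omega) c, e3,
          hcface ⟨(i : ℕ) - 1, by omega⟩ (by simp; omega), map_zero, add_zero, ← e3]

lemma fillN (n : ℕ) (x : Fin (n + 1) → X.obj (op ⦋n⦌)) (hx : hornCondN X n x) :
    ∃ y : X.obj (op ⦋n + 1⦌), ∀ i : Fin (n + 1), X.δ i.castSucc y = x i := by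
  cases n with
  | zero =>
    refine ⟨X.σ 0 (x 0), ?_⟩
    intro i
    have hi0 : i = 0 := Fin.fin_one_eq_zero i
    subst hi0
    exact ds_self_apply X (0 : Fin 1) (x 0)
  | succ k =>
    suffices h : ∀ r : ℕ, r ≤ k + 1 → ∃ y, ∀ i : Fin (k + 2),
        (i : ℕ) ≤ r → X.δ i.castSucc y = x i by
      obtain ⟨y, hy⟩ := h (k + 1) le_rfl
      exact ⟨y, fun i => hy i (by omega)⟩
    intro r
    induction r with
    | zero =>
      intro _
      refine ⟨X.σ 0 (x 0), ?_⟩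
      intro i hi
      have hil : i = 0 := by ext; simpa using hi
      subst hil
      exact ds_self_apply X (0 : Fin (k + 2)) (x 0)
    | succ r ih =>
      intro hr
      obtain ⟨w, hw⟩ := ih (by omega)
      set Q : Fin (k + 1) := ⟨r, by omega⟩ with hQ
      set c : X.obj (op ⦋k + 1⦌) := x Q.succ - X.δ (Q.castSucc.succ) w with hc
      have hcface : ∀ q : Fin (k + 1), (q : ℕ) ≤ r → X.δ q.castSucc c = 0 := by
        intro q hq
        have t1 := hx q Q (by simp [Fin.le_def, hQ]; omega)
        have t2 := dd_apply X (i := q.castSucc) (j := Q.castSucc)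
          (by simp [Fin.le_def, hQ]; omega) w
        have t3 : X.δ (q.castSucc).castSucc w = x q.castSucc :=
          hw q.castSucc (by simp; omega)
        rw [hc, map_sub, t1, t2, t3, sub_self]
      refine ⟨w + X.σ Q.succ c, ?_⟩
      intro i hi
      rw [map_add]
      by_cases hiP : (i : ℕ) = r + 1
      · have eiP : i = Q.succ := by ext; simp [hQ]; omega
        subst eiP
        rw [ds_self_apply X Q.succ c, hc, Fin.succ_castSucc]
        abel
      · have e3 : i = (⟨(i : ℕ), by omega⟩ : Fin (k + 1)).castSucc := by ext; simp
        rw [hw i (by omega), ds_le_apply X (i := i) (j := Q)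
          (by simp [Fin.le_def, hQ]; omega) c, e3,
          hcface ⟨(i : ℕ), by omega⟩ (by simp; omega), map_zero, add_zero, ← e3]

end Aux

/-- For a simplicial abelian group `X` and `m ≥ 0`, the following are equivalent:
(1) for every `n > m` the Segal maps `X_n → X_{Λ₀ⁿ}` and `X_n → X_{Λₙⁿ}` are
isomorphisms onto the horn groups; (2) the normalized Moore complex of `X` is
`m`-truncated, i.e. `⋂_{i=1}^{n} ker dᵢ = 0` for all `n > m`. -/
theorem stmt_16 (X : SimplicialObject AddCommGrpCat) (m : ℕ) :
    (∀ n : ℕ, m ≤ n →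
      (∀ y : X.obj (op ⦋n + 1⦌), segalMap0 X n y ∈ hornGroup0 X n) ∧
      (∀ z ∈ hornGroup0 X n, ∃! y : X.obj (op ⦋n + 1⦌), segalMap0 X n y = z) ∧
      (∀ y : X.obj (op ⦋n + 1⦌), segalMapN X n y ∈ hornGroupN X n) ∧
      (∀ z ∈ hornGroupN X n, ∃! y : X.obj (op ⦋n + 1⦌), segalMapN X n y = z))
    ↔
    (∀ n : ℕ, m ≤ n → ∀ y : X.obj (op ⦋n + 1⦌),
      (∀ i : Fin (n + 1), X.δ i.succ y = 0) → y = 0) := by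
  constructor
  · intro h n hn y hy
    obtain ⟨-, h2, -, -⟩ := h n hn
    obtain ⟨y₀, hy₀, huniq⟩ := h2 0 (zero_mem _)
    have e1 : segalMap0 X n y = 0 := funext fun i => hy i
    have e2 := huniq y e1
    have e3 := huniq 0 (map_zero _)
    rw [e2, ← e3]
  · intro h n hn
    have hN := h n hn
    refine ⟨seg0_mem X n, ?_, segN_mem X n, ?_⟩
    · intro z hz
      obtain ⟨y, hy⟩ := fill0 X n z hz
      refine ⟨y, funext hy, ?_⟩
      intro y' hy'
      have hd : y' - y = 0 := by
        apply hN
        intro i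
        have h1 : X.δ i.succ y' = z i := congrFun hy' i
        rw [map_sub, h1, hy i, sub_self]
      linear_combination (norm := abel) hd
    · intro z hz
      obtain ⟨y, hy⟩ := fillN X n z hz
      refine ⟨y, funext hy, ?_⟩
      intro y' hy'
      have hd : y' - y = 0 := by
        apply kerN_of_ker0 X n hN
        intro i
        have h1 : X.δ i.castSucc y' = z i := congrFun hy' i
        rw [map_sub, h1, hy i, sub_self]
      linear_combination (norm := abel) hd
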